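/- For every n ≥ 1, the increment permutation a ↦ a + 1 of ZMod (2^n) has sign −1 (it is a cycle of even length 2^n, hence an odd permutation). Consequently, for every n ≥ 4, the n-bit increment permutation of (Fin n → Bool), obtained by transporting a ↦ a + 1 on Fin (2^n) along the little-endian binary encoding equivalence, cannot be written as a composition of finitely many permutations each acting on at most 3 coordinates; i.e., the n-bit incrementer requires at least one ancilla qubit over the {CCX, CX, X} gate set. -/

import Mathlib

/-- A permutation `g` of bit strings *acts on at most 3 coordinates (qubits)* if there
is a set `S` of at most 3 coordinates such that `g` leaves all coordinates outside `S`
unchanged, and the restriction of `g x` to `S` depends only on the restriction of `x`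
to `S`. -/
def ActsOnAtMost3 {n : ℕ} (g : Equiv.Perm (Fin n → Bool)) : Prop :=
  ∃ S : Finset (Fin n), S.card ≤ 3 ∧
    (∀ (x : Fin n → Bool) (i : Fin n), i ∉ S → g x i = x i) ∧
    (∀ x y : Fin n → Bool, (∀ i ∈ S, x i = y i) → ∀ i ∈ S, g x i = g y i)

/-- The increment permutation on `ZMod m` is a cycle for `1 < m`. -/
lemma addRight_one_isCycle (m : ℕ) (hm : 1 < m) :
    (Equiv.addRight (1 : ZMod m)).IsCycle := by
  haveI : NeZero m := ⟨by omega⟩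
  haveI : Fact (1 < m) := ⟨hm⟩
  refine ⟨0, ?_, ?_⟩
  · simp
  · intro y _
    refine ⟨(y.val : ℤ), ?_⟩
    have hz : ∀ k : ℤ, (Equiv.addRight (1 : ZMod m)) ^ k = Equiv.addRight (k • (1 : ZMod m)) := by
      intro k
      induction k using Int.induction_on with
      | zero => ext x; simp
      | succ i ih =>
        rw [zpow_add_one, ih]; ext x
        simp [Equiv.Perm.mul_apply, add_smul, add_assoc]
        ring
      | pred i ih =>
        rw [zpow_sub_one, ih]; ext x
        rw [Equiv.Perm.mul_apply, Equiv.Perm.inv_def, Equiv.addRight_symm]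
        simp [sub_smul, sub_eq_add_neg, add_assoc]
        ring
    rw [hz]
    simp [ZMod.natCast_val, ZMod.cast_id]

lemma sign_addRight_one (m : ℕ) [NeZero m] (hm : 1 < m) (hme : Even m) :
    Equiv.Perm.sign (Equiv.addRight (1 : ZMod m)) = -1 := by
  haveI : Fact (1 < m) := ⟨hm⟩
  have hc := (addRight_one_isCycle m hm).sign
  have hsupp : (Equiv.addRight (1 : ZMod m)).support = Finset.univ := by
    apply Finset.eq_univ_iff_forall.mpr
    intro x
    rw [Equiv.Perm.mem_support]
    simp only [Equiv.coe_addRight]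
    intro hx
    exact (one_ne_zero : (1 : ZMod m) ≠ 0) (by rwa [add_eq_left] at hx)
  rw [hsupp, Finset.card_univ, ZMod.card] at hc
  rw [hc, hme.neg_one_pow]

/-- A permutation acting on at most 3 qubits (out of `n ≥ 4`) is even. -/
lemma sign_eq_one_of_actsOnAtMost3 {n : ℕ} (hn : 4 ≤ n)
    (g : Equiv.Perm (Fin n → Bool)) (hg : ActsOnAtMost3 g) :
    Equiv.Perm.sign g = 1 := by
  obtain ⟨S, hS, h1, h2⟩ := hg
  classical
  set A := ({i : Fin n // i ∈ S} → Bool)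
  set B := ({i : Fin n // ¬ i ∈ S} → Bool)
  let π : (Fin n → Bool) ≃ A × B :=
    Equiv.piEquivPiSubtypeProd (fun i => i ∈ S) (fun _ => Bool)
  -- extension of a partial assignment on S by `false`s
  let ext : A → (Fin n → Bool) := fun a i => if h : i ∈ S then a ⟨i, h⟩ else false
  have ext_mem : ∀ (a : A) (i : Fin n) (h : i ∈ S), ext a i = a ⟨i, h⟩ := by
    intro a i h; simp [ext, h]
  let H : A → A := fun a i => g (ext a) i.1
  -- key: for any x agreeing with a on S, (g x)|_S = H a
  have key : ∀ (x : Fin n → Bool) (a : A), (∀ i (h : i ∈ S), x i = a ⟨i, h⟩) →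
      ∀ i (h : i ∈ S), g x i = H a ⟨i, h⟩ := by
    intro x a hxa i h
    have := h2 x (ext a) (fun j hj => by rw [hxa j hj, ext_mem]) i h
    simpa [H] using this
  have Hinj : Function.Injective H := by
    intro a a' haa'
    have hx : g (ext a) = g (ext a') := by
      funext i
      by_cases h : i ∈ S
      · have e1 : g (ext a) i = H a ⟨i, h⟩ := key (ext a) a (fun j hj => ext_mem a j hj) i h
        have e2 : g (ext a') i = H a' ⟨i, h⟩ := key (ext a') a' (fun j hj => ext_mem a' j hj) i h
        rw [e1, e2, haa']
      · rw [h1 (ext a) i h, h1 (ext a') i h]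
        simp [ext, h]
    have := g.injective hx
    funext i
    have := congrFun this i.1
    simpa [ext, i.2] using this
  have Hbij : Function.Bijective H := (Finite.injective_iff_bijective).mp Hinj
  let Hperm : Equiv.Perm A := Equiv.ofBijective H Hbij
  -- transported permutation is prodCongrLeft of constant family
  have hconj : π.permCongr g = Equiv.prodCongrLeft (fun _ : B => Hperm) := by
    apply Equiv.ext
    rintro ⟨a, b⟩
    rw [Equiv.prodCongrLeft_apply]
    simp only [Equiv.permCongr_apply, π, Equiv.piEquivPiSubtypeProd]
    ext i
    · -- first component
      show g _ i.1 = Hperm a i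
      refine key _ a ?_ i.1 i.2
      intro j hj; simp [hj]
    · -- second component
      show g _ i.1 = b i
      rw [h1 _ i.1 i.2]
      simp [i.2]
  have hsign : Equiv.Perm.sign g = Equiv.Perm.sign (π.permCongr g) :=
    (Equiv.Perm.sign_permCongr π g).symm
  rw [hsign, hconj, Equiv.Perm.sign_prodCongrLeft, Finset.prod_const]
  -- card B = 2 ^ (n - S.card) is even since S.card ≤ 3 < n
  have hcardB : Fintype.card B = 2 ^ (n - S.card) := by
    rw [Fintype.card_fun, Fintype.card_bool]
    congr 1
    rw [Fintype.card_subtype, show (Finset.filter (fun x => ¬ x ∈ S) Finset.univ) = Sᶜ from by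
      ext x; simp, Finset.card_compl, Fintype.card_fin]
  obtain ⟨m, hm⟩ : ∃ m, Fintype.card B = 2 * m := by
    refine ⟨2 ^ (n - S.card - 1), ?_⟩
    rw [hcardB, ← pow_succ']
    congr 1
    omega
  rw [Finset.card_univ, hm, pow_mul, Int.units_sq, one_pow]

/-- **The incrementer is an odd permutation and needs an ancilla.**
For every `n ≥ 1`, the increment permutation `a ↦ a + 1` of `ZMod (2 ^ n)` has sign `-1`.
Consequently, for every `n ≥ 4`, the `n`-bit increment permutation of `Fin n → Bool`,
obtained by transporting `a ↦ a + 1` on `Fin (2 ^ n)` along the little-endian binary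
encoding equivalence, cannot be written as a composition of finitely many permutations
each acting on at most 3 coordinates; i.e. the `n`-bit incrementer requires at least one
ancilla qubit over the `{CCX, CX, X}` gate set. -/
theorem incrementer_odd_and_needs_ancilla :
    (∀ n : ℕ, 1 ≤ n → Equiv.Perm.sign (Equiv.addRight (1 : ZMod (2 ^ n))) = -1) ∧
    (∀ n : ℕ, 4 ≤ n →
      ∀ e : (Fin n → Bool) ≃ Fin (2 ^ n),
        (∀ x : Fin n → Bool,
            ((e x : Fin (2 ^ n)) : ℕ) = ∑ i : Fin n, 2 ^ (i : ℕ) * (if x i then 1 else 0)) →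
        ∀ σ : Equiv.Perm (Fin n → Bool),
          (∀ x : Fin n → Bool, ((e (σ x) : Fin (2 ^ n)) : ℕ) = (((e x : Fin (2 ^ n)) : ℕ) + 1) % 2 ^ n) →
          ¬ ∃ L : List (Equiv.Perm (Fin n → Bool)),
              (∀ g ∈ L, ActsOnAtMost3 g) ∧ L.prod = σ) := by
  constructor
  · intro n hn
    apply sign_addRight_one
    · exact Nat.one_lt_pow (by omega) (by norm_num)
    · exact Nat.even_pow.mpr ⟨even_two, by omega⟩
  · intro n hn e _ σ hσ ⟨L, hL, hLσ⟩
    haveI h2n : NeZero (2 ^ n) := ⟨by positivity⟩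
    -- the equiv Fin (2^n) ≃ ZMod (2^n)
    let f : Fin (2 ^ n) ≃ ZMod (2 ^ n) :=
      { toFun := fun i => (i : ℕ)
        invFun := fun a => ⟨a.val, a.val_lt⟩
        left_inv := fun i => by
          ext; exact ZMod.val_cast_of_lt i.isLt
        right_inv := fun a => by
          simp [ZMod.natCast_val, ZMod.cast_id] }
    have hf : ∀ i : Fin (2 ^ n), f i = ((i : ℕ) : ZMod (2 ^ n)) := fun _ => rfl
    let F : (Fin n → Bool) ≃ ZMod (2 ^ n) := e.trans f
    have hσeq : σ = F.symm.permCongr (Equiv.addRight (1 : ZMod (2 ^ n))) := by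
      apply Equiv.ext
      intro x
      simp only [Equiv.permCongr_apply, Equiv.symm_symm, Equiv.coe_addRight]
      apply F.injective
      rw [Equiv.apply_symm_apply]
      show F (σ x) = F x + 1
      show ((↑(e (σ x)) : ℕ) : ZMod (2 ^ n)) = ((↑(e x) : ℕ) : ZMod (2 ^ n)) + 1
      rw [hσ x, ZMod.natCast_mod]
      push_cast
      ring
    have hsσ : Equiv.Perm.sign σ = -1 := by
      rw [hσeq, Equiv.Perm.sign_permCongr]
      apply sign_addRight_one
      · exact Nat.one_lt_pow (by omega) (by norm_num)
      · exact Nat.even_pow.mpr ⟨even_two, by omega⟩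
    have hs1 : Equiv.Perm.sign σ = 1 := by
      rw [← hLσ, map_list_prod Equiv.Perm.sign]
      apply List.prod_eq_one
      intro u hu
      simp only [List.mem_map] at hu
      obtain ⟨g, hg, rfl⟩ := hu
      exact sign_eq_one_of_actsOnAtMost3 hn g (hL g hg)
    rw [hsσ] at hs1
    exact absurd hs1 (by decide)
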